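/- arXiv:2002.12120 — 9 statements merged into one kernel-verified Lean document; each statement's English description precedes it below -/
import Mathlib

section
/- Let (Ω, ⋆) be an associative semigroup with two additional operations ◁, ▷. Then (Ω, ⋆, ⋆, ◁, ▷) is an EDS if and only if for all α, β, γ ∈ Ω: α▷(β⋆γ) = α▷β; (α⋆β)◁γ = β◁γ; (α◁β)⋆(β◁γ) = α◁(β⋆γ); (α◁β)◁(β◁γ) = β◁γ; (α◁β)▷(β◁γ) = β▷γ; (α▷β)⋆(β▷γ) = (α⋆β)▷γ; (α▷β)◁(β▷γ) = α◁β; (α▷β)▷(β▷γ) = α▷β. -/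
/-- A diassociative semigroup: two operations `l` (←) and `r` (→). -/
def IsDiassoc {Ω : Type*} (l r : Ω → Ω → Ω) : Prop :=
  ∀ a b c : Ω,
    l (l a b) c = l a (l b c) ∧ l a (l b c) = l a (r b c) ∧
    l (r a b) c = r a (l b c) ∧
    r (r a b) c = r a (r b c) ∧ r (l a b) c = r a (r b c)

/-- An extended diassociative semigroup (EDS): a diassociative semigroup `(l, r)`
(`←`, `→`) with two further operations `tl` (◁) and `tr` (▷) satisfying the ten
EDS axioms. -/
def IsEDS {Ω : Type*} (l r tl tr : Ω → Ω → Ω) : Prop :=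
  IsDiassoc l r ∧ ∀ a b c : Ω,
    tr a (l b c) = tr a b ∧
    tl (r a b) c = tl b c ∧
    l (tl a b) (tl (l a b) c) = tl a (l b c) ∧
    tl (tl a b) (tl (l a b) c) = tl b c ∧
    r (tl a b) (tl (l a b) c) = tl a (r b c) ∧
    tr (tl a b) (tl (l a b) c) = tr b c ∧
    l (tr a (r b c)) (tr b c) = tr (l a b) c ∧
    tl (tr a (r b c)) (tr b c) = tl a b ∧
    r (tr a (r b c)) (tr b c) = tr (r a b) c ∧
    tr (tr a (r b c)) (tr b c) = tr a b

/-- For an associative semigroup `(Ω, ⋆)` with two further operations `◁ = tl`,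
`▷ = tr`, `(Ω, ⋆, ⋆, ◁, ▷)` is an EDS iff the eight listed identities hold. -/
theorem stmt5 {Ω : Type*} (star tl tr : Ω → Ω → Ω)
    (hassoc : ∀ a b c : Ω, star (star a b) c = star a (star b c)) :
    IsEDS star star tl tr ↔
      ∀ a b c : Ω,
        tr a (star b c) = tr a b ∧
        tl (star a b) c = tl b c ∧
        star (tl a b) (tl b c) = tl a (star b c) ∧
        tl (tl a b) (tl b c) = tl b c ∧
        tr (tl a b) (tl b c) = tr b c ∧
        star (tr a b) (tr b c) = tr (star a b) c ∧
        tl (tr a b) (tr b c) = tl a b ∧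
        tr (tr a b) (tr b c) = tr a b := by

  constructor
  · rintro ⟨-, h⟩
    intro a b c
    obtain ⟨h1, h2, h3, h4, h5, h6, h7, h8, h9, h10⟩ := h a b c
    have e2 : ∀ x y z : Ω, tl (star x y) z = tl y z := fun x y z => (h x y z).2.1
    have e1 : ∀ x y z : Ω, tr x (star y z) = tr x y := fun x y z => (h x y z).1
    rw [e2 a b c] at h3 h4 h6
    rw [e1 a b c] at h7 h8 h10
    exact ⟨h1, h2, h3, h4, h6, h7, h8, h10⟩
  · intro h
    refine ⟨fun a b c => ⟨hassoc a b c, rfl, hassoc a b c, hassoc a b c, hassoc a b c⟩,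
      fun a b c => ?_⟩
    obtain ⟨h1, h2, h3, h4, h5, h6, h7, h8⟩ := h a b c
    refine ⟨h1, h2, ?_, ?_, ?_, ?_, ?_, ?_, ?_, ?_⟩ <;>
      simp only [(h a b c).2.1, (h a b c).1] <;>
      first | exact h3 | exact h4 | exact h5 | exact h6 | exact h7 | exact h8
end

section
/- Let Ω be a set with ← and → given by α←β = α, α→β = β, together with operations ◁, ▷. Then (Ω, ←, →, ◁, ▷) is an EDS if and only if for all α, β, γ ∈ Ω: (α◁β)◁(α◁γ) = β◁γ; (α◁β)▷(α◁γ) = β▷γ; (α▷γ)◁(β▷γ) = α◁β; (α▷γ)▷(β▷γ) = α▷β. -/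
/-- For `α←β = α`, `α→β = β` and operations `◁ = tl`, `▷ = tr`,
`(Ω, ←, →, ◁, ▷)` is an EDS iff the four listed identities hold. -/
theorem stmt6 {Ω : Type*} (tl tr : Ω → Ω → Ω) :
    IsEDS (fun a _ => a) (fun _ b => b) tl tr ↔
      ∀ a b c : Ω,
        tl (tl a b) (tl a c) = tl b c ∧
        tr (tl a b) (tl a c) = tr b c ∧
        tl (tr a c) (tr b c) = tl a b ∧
        tr (tr a c) (tr b c) = tr a b := by
  constructor
  · rintro ⟨_, h⟩ a b c
    obtain ⟨_, _, _, h4, _, h6, _, h8, _, h10⟩ := h a b c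
    exact ⟨h4, h6, h8, h10⟩
  · intro h
    refine ⟨fun a b c => ⟨rfl, rfl, rfl, rfl, rfl⟩, fun a b c => ?_⟩
    obtain ⟨h4, h6, h8, h10⟩ := h a b c
    exact ⟨rfl, rfl, rfl, h4, rfl, h6, rfl, h8, rfl, h10⟩
end

section
/- Let (Ω, ←, →) be a diassociative semigroup and φ◁, φ▷ : Ω → Ω two maps. Define α◁β = φ◁(β) and α▷β = φ▷(α). Then (Ω, ←, →, ◁, ▷) is an EDS if and only if φ◁ = φ◁∘φ◁ = φ◁∘φ▷, φ▷ = φ▷∘φ◁ = φ▷∘φ▷, and both φ◁ and φ▷ are morphisms of diassociative semigroups (they commute with ← and →). -/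
/-- For a diassociative semigroup `(Ω, ←, →)` and maps `φ◁, φ▷ : Ω → Ω`, setting
`α◁β = φ◁(β)`, `α▷β = φ▷(α)` yields an EDS iff `φ◁ = φ◁∘φ◁ = φ◁∘φ▷`,
`φ▷ = φ▷∘φ◁ = φ▷∘φ▷`, and `φ◁`, `φ▷` are diassociative semigroup morphisms. -/
theorem stmt7 {Ω : Type*} (l r : Ω → Ω → Ω) (h : IsDiassoc l r)
    (φl φr : Ω → Ω) :
    IsEDS l r (fun _ b => φl b) (fun a _ => φr a) ↔
      ((∀ a, φl (φl a) = φl a) ∧ (∀ a, φl (φr a) = φl a) ∧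
       (∀ a, φr (φl a) = φr a) ∧ (∀ a, φr (φr a) = φr a) ∧
       (∀ a b, φl (l a b) = l (φl a) (φl b)) ∧
       (∀ a b, φl (r a b) = r (φl a) (φl b)) ∧
       (∀ a b, φr (l a b) = l (φr a) (φr b)) ∧
       (∀ a b, φr (r a b) = r (φr a) (φr b))) := by
  constructor
  · rintro ⟨-, H⟩
    refine ⟨fun a => (H a a a).2.2.2.1, fun a => (H a a a).2.2.2.2.2.2.2.1,
      fun a => (H a a a).2.2.2.2.2.1, fun a => (H a a a).2.2.2.2.2.2.2.2.2,
      fun a b => ((H a a b).2.2.1).symm, fun a b => ((H a a b).2.2.2.2.1).symm,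
      fun a b => ((H a b b).2.2.2.2.2.2.1).symm,
      fun a b => ((H a b b).2.2.2.2.2.2.2.2.1).symm⟩
  · rintro ⟨h1, h2, h3, h4, h5, h6, h7, h8⟩
    exact ⟨h, fun a b c => ⟨rfl, rfl, (h5 b c).symm, h1 c, (h6 b c).symm, h3 b,
      (h7 a b).symm, h2 b, (h8 a b).symm, h4 a⟩⟩
end

section
/- Let (Ω, ⋆, ⋆, ◁, ▷) be an EDS such that (Ω, ⋆) is a group. Then there exist group endomorphisms φ◁, φ▷ of Ω with φ◁² = φ◁, φ▷² = φ▷, ker φ◁ = ker φ▷, and such that α◁β = φ◁(β) and α▷β = φ▷(α) for all α, β ∈ Ω. In particular Ω = K ⋊ im(φ◁) = K ⋊ im(φ▷) where K is the common kernel. -/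
lemma idem_complement {G : Type*} [Group G] (φ : G →* G)
    (hid : ∀ g, φ (φ g) = φ g) : Subgroup.IsComplement' φ.ker φ.range := by
  constructor
  · rintro ⟨⟨k, hk⟩, ⟨h1, hh⟩⟩ ⟨⟨k', hk'⟩, ⟨h', hh'⟩⟩ heq
    simp only [Prod.mk.injEq, Subtype.mk.injEq] at heq ⊢
    have hk0 : φ k = 1 := hk
    have hk0' : φ k' = 1 := hk'
    obtain ⟨x, rfl⟩ := hh
    obtain ⟨x', rfl⟩ := hh'
    have := heq
    have h2 : φ (k * φ x) = φ (k' * φ x') := by rw [this]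
    simp only [map_mul, hk0, hk0', hid, one_mul] at h2
    constructor
    · have := heq
      rw [h2] at this
      exact mul_right_cancel this
    · exact h2
  · intro g
    refine ⟨⟨⟨g * (φ g)⁻¹, ?_⟩, ⟨φ g, ⟨g, rfl⟩⟩⟩, by simp⟩
    simp [MonoidHom.mem_ker, hid]

theorem stmt9' {G : Type*} [Group G] (tl tr : G → G → G)
    (h : IsEDS (fun a b => a * b) (fun a b => a * b) tl tr) :
    ∃ φl φr : G →* G,
      (∀ g, φl (φl g) = φl g) ∧ (∀ g, φr (φr g) = φr g) ∧
      φl.ker = φr.ker ∧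
      (∀ a b, tl a b = φl b) ∧ (∀ a b, tr a b = φr a) ∧
      Subgroup.IsComplement' φl.ker φl.range ∧
      Subgroup.IsComplement' φr.ker φr.range := by
  obtain ⟨-, hax⟩ := h
  -- dependence lemmas
  have htl : ∀ a b, tl a b = tl 1 b := by
    intro a b
    have := (hax a 1 b).2.1
    simpa using this
  have htr : ∀ a b, tr a b = tr a 1 := by
    intro a b
    have := (hax a 1 b).1
    simpa using this
  set fl : G → G := tl 1 with hfl
  set fr : G → G := fun a => tr a 1 with hfr
  have flmul : ∀ b c, fl (b * c) = fl b * fl c := by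
    intro b c
    have := (hax 1 b c).2.2.1
    simp only at this
    rw [htl (1 * b) c] at this
    exact this.symm
  have frmul : ∀ a b, fr (a * b) = fr a * fr b := by
    intro a b
    have := (hax a b 1).2.2.2.2.2.2.1
    simp only at this
    rw [htr a (b * 1), htr b 1] at this
    simpa [hfr] using this.symm
  have flidem : ∀ g, fl (fl g) = fl g := by
    intro g
    have := (hax 1 1 g).2.2.2.1
    simp only at this
    rw [htl (tl 1 1), htl (1 * 1)] at this
    simpa [hfl] using this
  have fridem : ∀ g, fr (fr g) = fr g := by
    intro g
    have := (hax g 1 1).2.2.2.2.2.2.2.2.2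
    simp only at this
    rw [htr (tr g (1 * 1)), htr g (1 * 1)] at this
    simpa [hfr] using this
  have frfl : ∀ g, fr (fl g) = fr g := by
    intro g
    have := (hax 1 g 1).2.2.2.2.2.1
    simp only at this
    rw [htr (tl 1 g), htr g 1, htl 1 g] at this
    simpa [hfl, hfr] using this
  have flfr : ∀ g, fl (fr g) = fl g := by
    intro g
    have := (hax 1 g 1).2.2.2.2.2.2.2.1
    simp only at this
    rw [htl (tr 1 (g * 1)), htl 1 g, htr g 1] at this
    simpa [hfl, hfr] using this
  refine ⟨MonoidHom.mk' fl flmul, MonoidHom.mk' fr frmul, flidem, fridem, ?_, ?_, ?_, ?_, ?_⟩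
  · ext g
    simp only [MonoidHom.mem_ker, MonoidHom.mk'_apply]
    constructor
    · intro hg
      have := frfl g
      rw [hg] at this
      rw [← this]
      have h1 : fr (1:G) = fr 1 * fr 1 := by simpa using frmul 1 1
      exact left_eq_mul.mp h1
    · intro hg
      have := flfr g
      rw [hg] at this
      rw [← this]
      have h1 : fl (1:G) = fl 1 * fl 1 := by simpa using flmul 1 1
      exact left_eq_mul.mp h1
  · intro a b; rw [htl a b]; rfl
  · intro a b; rw [htr a b]; rfl
  · exact idem_complement _ flidem
  · exact idem_complement _ fridem

/-- For an EDS `(Ω, ⋆, ⋆, ◁, ▷)` where `(Ω, ⋆)` is a group: there are group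
endomorphisms `φ◁`, `φ▷` with `φ◁² = φ◁`, `φ▷² = φ▷`, equal kernels, and
`α◁β = φ◁(β)`, `α▷β = φ▷(α)`; moreover `Ω = K ⋊ im φ◁ = K ⋊ im φ▷` (the kernel
is a complement of each image). -/
theorem stmt9 {G : Type*} [Group G] (tl tr : G → G → G)
    (h : IsEDS (fun a b => a * b) (fun a b => a * b) tl tr) :
    ∃ φl φr : G →* G,
      (∀ g, φl (φl g) = φl g) ∧ (∀ g, φr (φr g) = φr g) ∧
      φl.ker = φr.ker ∧
      (∀ a b, tl a b = φl b) ∧ (∀ a b, tr a b = φr a) ∧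
      Subgroup.IsComplement' φl.ker φl.range ∧
      Subgroup.IsComplement' φr.ker φr.range := by
  exact stmt9' tl tr h
end

section
/- A set Ω with four operations ←, →, ◁, ▷ is an EDS if and only if the maps φ← : Ω² → Ω², (α,β) ↦ (α←β, α◁β), and φ→ : Ω² → Ω², (α,β) ↦ (α→β, α▷β), together with the swap τ(α,β) = (β,α), satisfy the five braiding-type identities: (τ⊗Id)∘(Id⊗φ←)∘(τ⊗Id)∘(φ→⊗Id) = (φ→⊗Id)∘(Id⊗φ←); (Id⊗φ←)∘(τ⊗Id)∘(Id⊗φ←)∘(τ⊗Id)∘(φ←⊗Id) = (φ←⊗Id)∘(Id⊗φ←); (Id⊗φ→)∘(τ⊗Id)∘(Id⊗φ←)∘(τ⊗Id)∘(φ←⊗Id) = (φ←⊗Id)∘(Id⊗φ→); (Id⊗φ←)∘(φ→⊗Id)∘(Id⊗φ→) = (φ→⊗Id)∘(Id⊗τ)∘(φ←⊗Id); (Id⊗φ→)∘(φ→⊗Id)∘(Id⊗φ→) = (φ→⊗Id)∘(Id⊗τ)∘(φ→⊗Id), where these are maps on Ω³ with f⊗Id acting on the first two components and Id⊗f on the last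 two. -/
/-- Apply a map of pairs to the first two components of a triple. -/
def onFirstTwo {Ω : Type*} (f : Ω × Ω → Ω × Ω) : Ω × Ω × Ω → Ω × Ω × Ω :=
  fun p => ((f (p.1, p.2.1)).1, (f (p.1, p.2.1)).2, p.2.2)

/-- Apply a map of pairs to the last two components of a triple. -/
def onLastTwo {Ω : Type*} (f : Ω × Ω → Ω × Ω) : Ω × Ω × Ω → Ω × Ω × Ω :=
  fun p => (p.1, f p.2)

/-- The swap `τ(α,β) = (β,α)`. -/
def swapPair {Ω : Type*} : Ω × Ω → Ω × Ω := fun p => (p.2, p.1)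

/-- `(Ω, ←, →, ◁, ▷)` is an EDS iff the maps `φ←(α,β) = (α←β, α◁β)` and
`φ→(α,β) = (α→β, α▷β)` together with the swap `τ` satisfy the five
braiding-type identities on `Ω³`. -/
theorem stmt10 {Ω : Type*} (l r tl tr : Ω → Ω → Ω) :
    IsEDS l r tl tr ↔
      (let φl : Ω × Ω → Ω × Ω := fun p => (l p.1 p.2, tl p.1 p.2)
       let φr : Ω × Ω → Ω × Ω := fun p => (r p.1 p.2, tr p.1 p.2)
       (onFirstTwo swapPair ∘ onLastTwo φl ∘ onFirstTwo swapPair ∘ onFirstTwo φr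
          = onFirstTwo φr ∘ onLastTwo φl) ∧
       (onLastTwo φl ∘ onFirstTwo swapPair ∘ onLastTwo φl ∘ onFirstTwo swapPair ∘
          onFirstTwo φl = onFirstTwo φl ∘ onLastTwo φl) ∧
       (onLastTwo φr ∘ onFirstTwo swapPair ∘ onLastTwo φl ∘ onFirstTwo swapPair ∘
          onFirstTwo φl = onFirstTwo φl ∘ onLastTwo φr) ∧
       (onLastTwo φl ∘ onFirstTwo φr ∘ onLastTwo φr
          = onFirstTwo φr ∘ onLastTwo swapPair ∘ onFirstTwo φl) ∧
       (onLastTwo φr ∘ onFirstTwo φr ∘ onLastTwo φr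
          = onFirstTwo φr ∘ onLastTwo swapPair ∘ onFirstTwo φr)) := by
  simp only [IsEDS, IsDiassoc]
  constructor
  · rintro ⟨hd, he⟩
    refine ⟨?_, ?_, ?_, ?_, ?_⟩ <;>
      funext p <;> obtain ⟨a, b, c⟩ := p <;>
      obtain ⟨d1, d2, d3, d4, d5⟩ := hd a b c <;>
      obtain ⟨e1, e2, e3, e4, e5, e6, e7, e8, e9, e10⟩ := he a b c <;>
      simp only [onFirstTwo, onLastTwo, swapPair, Function.comp_apply, Prod.mk.injEq]
    · exact ⟨d3, e1.symm, e2⟩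
    · exact ⟨d1, e3, e4⟩
    · exact ⟨d1.trans d2, e5, e6⟩
    · exact ⟨d5.symm, e7, e8⟩
    · exact ⟨d4.symm, e9, e10⟩
  · rintro ⟨h1, h2, h3, h4, h5⟩
    have H1 := fun a b c : Ω => congrFun h1 (a, b, c)
    have H2 := fun a b c : Ω => congrFun h2 (a, b, c)
    have H3 := fun a b c : Ω => congrFun h3 (a, b, c)
    have H4 := fun a b c : Ω => congrFun h4 (a, b, c)
    have H5 := fun a b c : Ω => congrFun h5 (a, b, c)
    simp only [onFirstTwo, onLastTwo, swapPair, Function.comp_apply, Prod.mk.injEq] at H1 H2 H3 H4 H5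
    constructor
    · intro a b c
      obtain ⟨p1, _, _⟩ := H1 a b c
      obtain ⟨q1, _, _⟩ := H2 a b c
      obtain ⟨s1, _, _⟩ := H3 a b c
      obtain ⟨t1, _, _⟩ := H4 a b c
      obtain ⟨u1, _, _⟩ := H5 a b c
      exact ⟨q1, q1.symm.trans s1, p1, u1.symm, t1.symm⟩
    · intro a b c
      obtain ⟨_, p2, p3⟩ := H1 a b c
      obtain ⟨_, q2, q3⟩ := H2 a b c
      obtain ⟨_, s2, s3⟩ := H3 a b c
      obtain ⟨_, t2, t3⟩ := H4 a b c
      obtain ⟨_, u2, u3⟩ := H5 a b c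
      exact ⟨p2.symm, p3, q2, q3, s2, s3, t2, t3, u2, u3⟩
end

section
/- Let Ω be a finite nondegenerate EDS whose ← and → are given by α←β = α and α→β = β. Then there exist a group (H, ⋆), a nonempty set K, and a map θ : K → H such that Ω is isomorphic (as an EDS) to the EDS on H × K with (α,α')◁(β,β') = (α⁻¹⋆β, β') and (α,α')▷(β,β') = (θ(β')⋆β⁻¹⋆α, α'). -/
namespace Stmt14Aux

variable {Ω : Type} {tl tr : Ω → Ω → Ω}

noncomputable def La (tl : Ω → Ω → Ω) (hb : ∀ a, Function.Bijective (tl a)) (a : Ω) : Equiv.Perm Ω :=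
  Equiv.ofBijective (tl a) (hb a)

noncomputable def Ra (tr : Ω → Ω → Ω) (hb : ∀ c, Function.Bijective (fun a => tr a c)) (c : Ω) :
    Equiv.Perm Ω :=
  Equiv.ofBijective (fun a => tr a c) (hb c)

theorem La_apply (hb : ∀ a, Function.Bijective (tl a)) (a x : Ω) :
    La tl hb a x = tl a x := rfl

theorem Ra_apply (hb : ∀ c, Function.Bijective (fun a => tr a c)) (c x : Ω) :
    Ra tr hb c x = tr x c := rfl

theorem Lmul (hb : ∀ a, Function.Bijective (tl a))
    (h1 : ∀ a b c : Ω, tl (tl a b) (tl a c) = tl b c) (a b : Ω) :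
    La tl hb (tl a b) = La tl hb b * (La tl hb a)⁻¹ := by
  ext x
  obtain ⟨c, rfl⟩ := (hb a).surjective x
  rw [Equiv.Perm.mul_apply, La_apply, h1,
      show tl a c = La tl hb a c from rfl, Equiv.Perm.inv_def, Equiv.symm_apply_apply]
  rfl

theorem Rmul (hbl : ∀ a, Function.Bijective (tl a))
    (hbr : ∀ c, Function.Bijective (fun a => tr a c))
    (h2 : ∀ a b c : Ω, tr (tl a b) (tl a c) = tr b c) (a c : Ω) :
    Ra tr hbr (tl a c) = Ra tr hbr c * (La tl hbl a)⁻¹ := by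
  ext x
  obtain ⟨b, rfl⟩ := (hbl a).surjective x
  rw [Equiv.Perm.mul_apply, Ra_apply, h2,
      show tl a b = La tl hbl a b from rfl, Equiv.Perm.inv_def, Equiv.symm_apply_apply]
  rfl

theorem LR (hbl : ∀ a, Function.Bijective (tl a))
    (hbr : ∀ c, Function.Bijective (fun a => tr a c))
    (h3 : ∀ a b c : Ω, tl (tr a c) (tr b c) = tl a b) (a c : Ω) :
    La tl hbl (tr a c) = La tl hbl a * (Ra tr hbr c)⁻¹ := by
  ext x
  obtain ⟨b, rfl⟩ := (hbr c).surjective x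
  show tl (tr a c) (tr b c) = _
  rw [Equiv.Perm.mul_apply, h3,
      show (fun a => tr a c) b = Ra tr hbr c b from rfl, Equiv.Perm.inv_def, Equiv.symm_apply_apply]
  rfl

end Stmt14Aux

/-- Proposition 10: a finite nondegenerate EDS with `α←β = α`, `α→β = β`
(whose remaining axioms reduce to the four listed identities, nondegeneracy
meaning that `φ←(α,β) = (α, α◁β)` and `φ→(α,β) = (β, α▷β)` are bijective) is
isomorphic to the EDS `EDS*(H, ⋆, K, θ)` on `H × K` for some group `(H, ⋆)`,
nonempty set `K` and map `θ : K → H`, where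
`(α,α')◁(β,β') = (α⁻¹⋆β, β')` and `(α,α')▷(β,β') = (θ(β')⋆β⁻¹⋆α, α')`. -/
theorem stmt14 {Ω : Type} [Finite Ω] [Nonempty Ω] (tl tr : Ω → Ω → Ω)
    (haxioms : ∀ a b c : Ω,
      tl (tl a b) (tl a c) = tl b c ∧
      tr (tl a b) (tl a c) = tr b c ∧
      tl (tr a c) (tr b c) = tl a b ∧
      tr (tr a c) (tr b c) = tr a b)
    (hl : Function.Bijective (fun p : Ω × Ω => (p.1, tl p.1 p.2)))
    (hr : Function.Bijective (fun p : Ω × Ω => (p.2, tr p.1 p.2))) :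
    ∃ (H : Type) (mulH : H → H → H) (e : H) (inv : H → H),
      (∀ x y z : H, mulH (mulH x y) z = mulH x (mulH y z)) ∧
      (∀ x, mulH e x = x) ∧ (∀ x, mulH x e = x) ∧
      (∀ x, mulH (inv x) x = e) ∧ (∀ x, mulH x (inv x) = e) ∧
      ∃ (K : Type) (_ : Nonempty K) (θ : K → H) (Φ : Ω ≃ H × K),
        (∀ a b : Ω,
          Φ (tl a b) = (mulH (inv (Φ a).1) (Φ b).1, (Φ b).2)) ∧
        (∀ a b : Ω,
          Φ (tr a b) = (mulH (θ (Φ b).2) (mulH (inv (Φ b).1) (Φ a).1), (Φ a).2)) := by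
  classical
  obtain ⟨h1, h2, h3, h4⟩ :
      (∀ a b c : Ω, tl (tl a b) (tl a c) = tl b c) ∧
      (∀ a b c : Ω, tr (tl a b) (tl a c) = tr b c) ∧
      (∀ a b c : Ω, tl (tr a c) (tr b c) = tl a b) ∧
      (∀ a b c : Ω, tr (tr a c) (tr b c) = tr a b) :=
    ⟨fun a b c => (haxioms a b c).1, fun a b c => (haxioms a b c).2.1,
     fun a b c => (haxioms a b c).2.2.1, fun a b c => (haxioms a b c).2.2.2⟩
  -- left translations are bijective
  have hbl : ∀ a, Function.Bijective (tl a) := by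
    intro a
    constructor
    · intro x y hxy
      have := hl.injective (a₁ := (a, x)) (a₂ := (a, y)) (by simpa using hxy)
      simpa using congrArg Prod.snd this
    · intro y
      obtain ⟨p, hp⟩ := hl.surjective (a, y)
      have hp1 : p.1 = a := congrArg Prod.fst hp
      have hp2 : tl p.1 p.2 = y := congrArg Prod.snd hp
      exact ⟨p.2, by rw [← hp1]; exact hp2⟩
  have hbr : ∀ c, Function.Bijective (fun a => tr a c) := by
    intro c
    constructor
    · intro x y hxy
      have := hr.injective (a₁ := (x, c)) (a₂ := (y, c)) (by simpa using hxy)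
      simpa using congrArg Prod.fst this
    · intro y
      obtain ⟨p, hp⟩ := hr.surjective (c, y)
      have hp1 : p.2 = c := congrArg Prod.fst hp
      have hp2 : tr p.1 p.2 = y := congrArg Prod.snd hp
      exact ⟨p.1, by simp only []; rw [← hp1]; exact hp2⟩
  set L : Ω → Equiv.Perm Ω := Stmt14Aux.La tl hbl with hLdef
  set R : Ω → Equiv.Perm Ω := Stmt14Aux.Ra tr hbr with hRdef
  have hLapp : ∀ a x, L a x = tl a x := fun _ _ => rfl
  have hRapp : ∀ c x, R c x = tr x c := fun _ _ => rfl
  have hLmul : ∀ a b, L (tl a b) = L b * (L a)⁻¹ := Stmt14Aux.Lmul hbl h1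
  have hRmul : ∀ a c, R (tl a c) = R c * (L a)⁻¹ := Stmt14Aux.Rmul hbl hbr h2
  have hLR : ∀ a c, L (tr a c) = L a * (R c)⁻¹ := Stmt14Aux.LR hbl hbr h3
  have hLone : ∀ a x : Ω, tl (tl a a) x = x := by
    intro a x
    have : L (tl a a) x = (L a * (L a)⁻¹) x := by rw [hLmul]
    simpa [hLapp] using this
  have hmulmem : ∀ a b : Ω, ∃ d, L d = L a * L b := by
    intro a b
    refine ⟨tl (tl b (tl b b)) a, ?_⟩
    rw [hLmul, hLmul, hLmul]
    group
  let S : Subgroup (Equiv.Perm Ω) :=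
    { carrier := Set.range L
      one_mem' := ⟨tl (Classical.arbitrary Ω) (Classical.arbitrary Ω), by
        rw [hLmul]; group⟩
      mul_mem' := by
        rintro x y ⟨a, rfl⟩ ⟨b, rfl⟩
        exact hmulmem a b
      inv_mem' := by
        rintro x ⟨a, rfl⟩
        exact ⟨tl a (tl a a), by rw [hLmul, hLmul]; group⟩ }
  have hRmem : ∀ c, R c ∈ S := by
    intro c
    have : R c = (L (tr c c))⁻¹ * L c := by
      rw [hLR c c]; group
    rw [this]
    exact S.mul_mem (S.inv_mem ⟨tr c c, rfl⟩) ⟨c, rfl⟩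
  -- the setoid whose classes form K
  letI st : Setoid Ω :=
    ⟨fun a b => ∃ d, tl d a = b, by
      constructor
      · intro a
        exact ⟨tl a a, hLone a a⟩
      · rintro a b ⟨d, rfl⟩
        exact ⟨tl d (tl d d), (h1 d (tl d d) a).trans (hLone d a)⟩
      · rintro a b c ⟨d, rfl⟩ ⟨e, rfl⟩
        obtain ⟨f, hf⟩ := hmulmem e d
        refine ⟨f, ?_⟩
        have : L f a = (L e * L d) a := by rw [hf]
        simpa [hLapp, Equiv.Perm.mul_apply] using this⟩
  -- θ is well-defined on the quotient
  have hθwd : ∀ c c' : Ω, st.r c c' → R c * (L c)⁻¹ = R c' * (L c')⁻¹ := by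
    rintro c c' ⟨d, rfl⟩
    rw [hRmul, hLmul]
    group
  let θ0 : Ω → ↥S := fun c =>
    ⟨R c * (L c)⁻¹, S.mul_mem (hRmem c) (S.inv_mem ⟨c, rfl⟩)⟩
  let θ : Quotient st → ↥S := Quotient.lift θ0 (fun c c' h => Subtype.ext (hθwd c c' h))
  -- the bijection Φ
  let Φ0 : Ω → ↥S × Quotient st := fun a =>
    (⟨(L a)⁻¹, S.inv_mem ⟨a, rfl⟩⟩, Quotient.mk st a)
  have hΦbij : Function.Bijective Φ0 := by
    constructor
    · intro a b hab
      have hfst : (L a)⁻¹ = (L b)⁻¹ :=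
        congrArg Subtype.val (congrArg Prod.fst hab)
      have hLab : L a = L b := by
        simpa using congrArg (·⁻¹) hfst
      have hsnd := congrArg Prod.snd hab
      obtain ⟨d, rfl⟩ := Quotient.exact (hsnd : Quotient.mk st a = Quotient.mk st b)
      have h1' : L a = L a * (L d)⁻¹ := by
        conv_lhs => rw [hLab, hLmul d a]
      have hinv : ((L d)⁻¹ : Equiv.Perm Ω) = 1 :=
        mul_left_cancel (a := L a) (by rw [← h1', mul_one])
      have hd1 : L d = 1 := by simpa using congrArg (·⁻¹) hinv
      have : tl d a = a := by
        have := congrArg (fun σ : Equiv.Perm Ω => σ a) hd1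
        simpa [hLapp] using this
      exact this.symm
    · rintro ⟨⟨σ, c, rfl⟩, q⟩
      obtain ⟨a, rfl⟩ := Quotient.exists_rep q
      obtain ⟨d, hd⟩ := hmulmem c a
      refine ⟨tl d a, ?_⟩
      refine Prod.ext ?_ ?_
      · apply Subtype.ext
        show (L (tl d a))⁻¹ = L c
        rw [hLmul, hd]
        group
      · exact Quotient.sound (Setoid.symm ⟨d, rfl⟩)
  let Φ : Ω ≃ ↥S × Quotient st := Equiv.ofBijective Φ0 hΦbij
  refine ⟨↥S, (· * ·), 1, (·⁻¹),
    fun x y z => mul_assoc x y z, one_mul, mul_one,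
    fun x => inv_mul_cancel x, fun x => mul_inv_cancel x,
    Quotient st, ⟨Quotient.mk st (Classical.arbitrary Ω)⟩, θ, Φ, ?_, ?_⟩
  · intro a b
    show Φ0 (tl a b) = _
    refine Prod.ext ?_ ?_
    · apply Subtype.ext
      show (L (tl a b))⁻¹ = ((L a)⁻¹)⁻¹ * (L b)⁻¹
      rw [hLmul]
      group
    · exact (Quotient.sound (show st.r b (tl a b) from ⟨a, rfl⟩)).symm
  · intro a b
    show Φ0 (tr a b) = _
    refine Prod.ext ?_ ?_
    · apply Subtype.ext
      show (L (tr a b))⁻¹ = (R b * (L b)⁻¹) * (((L b)⁻¹)⁻¹ * (L a)⁻¹)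
      rw [hLR]
      group
    · obtain ⟨d, hd⟩ := hRmem b
      have htl : tl d a = tr a b := by
        have := congrArg (fun σ : Equiv.Perm Ω => σ a) hd
        simpa [hLapp, hRapp] using this
      exact (Quotient.sound (show st.r a (tr a b) from ⟨d, htl⟩)).symm
end

section
/- Let Ω be an EDS and A a vector space with products ≺_α, ≻_α (α ∈ Ω) making A an Ω-dendriform algebra. Define on KΩ ⊗ A: (α⊗x)≺(β⊗y) = (α←β)⊗(x≺_{α◁β}y) and (α⊗x)≻(β⊗y) = (α→β)⊗(x≻_{α▷β}y). Then (KΩ⊗A, ≺, ≻) is a dendriform algebra: (u≺v)≺w = u≺(v≺w + v≻w), (u≻v)≺w = u≻(v≺w), and (u≺v + u≻v)≻w = u≻(v≻w). Conversely, if φ← and φ→ are surjective and KΩ⊗A is dendriform, then A is Ω-dendriform. -/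
/-- `Ω`-dendriform axioms for a pair of families of products on an additive
structure. -/
def IsOmegaDendriform {Ω A : Type*} [Add A] (l r tl tr : Ω → Ω → Ω)
    (p s : Ω → A → A → A) : Prop :=
  ∀ (α β : Ω) (x y z : A),
    p β (p α x y) z = p (l α β) x (p (tl α β) y z) + p (r α β) x (s (tr α β) y z) ∧
    s α x (p β y z) = p β (s α x y) z ∧
    s α x (s β y z) = s (r α β) (s (tr α β) x y) z + s (l α β) (p (tl α β) x y) z

/-- The (Loday) dendriform axioms. -/
def IsDendriform {M : Type*} [Add M] (P S : M → M → M) : Prop :=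
  ∀ x y z : M,
    P (P x y) z = P x (P y z + S y z) ∧
    P (S x y) z = S x (P y z) ∧
    S x (S y z) = S (P x y + S x y) z

/-- The product `(α⊗x) ≺ (β⊗y) = (α←β) ⊗ (x ≺_{α◁β} y)` on `KΩ ⊗ A ≅ Ω →₀ A`,
extended bilinearly. -/
noncomputable def tensorProd {K : Type*} [Field K] {Ω : Type*} {A : Type*}
    [AddCommGroup A] [Module K A] (l tl : Ω → Ω → Ω)
    (p : Ω → A →ₗ[K] A →ₗ[K] A) (u v : Ω →₀ A) : Ω →₀ A :=
  u.sum fun α x => v.sum fun β y => Finsupp.single (l α β) (p (tl α β) x y)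


section Aux
variable {K : Type*} [Field K] {Ω A : Type*} [AddCommGroup A] [Module K A]

lemma tp_ss (l tl : Ω → Ω → Ω) (p : Ω → A →ₗ[K] A →ₗ[K] A) (α β : Ω) (x y : A) :
    tensorProd (K := K) l tl p (Finsupp.single α x) (Finsupp.single β y)
      = Finsupp.single (l α β) (p (tl α β) x y) := by
  unfold tensorProd
  rw [Finsupp.sum_single_index (by simp), Finsupp.sum_single_index (by simp)]

lemma tp_zero_left (l tl : Ω → Ω → Ω) (p : Ω → A →ₗ[K] A →ₗ[K] A) (v : Ω →₀ A) :
    tensorProd (K := K) l tl p 0 v = 0 :=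
  Finsupp.sum_zero_index

lemma tp_zero_right (l tl : Ω → Ω → Ω) (p : Ω → A →ₗ[K] A →ₗ[K] A) (u : Ω →₀ A) :
    tensorProd (K := K) l tl p u 0 = 0 := by
  simp [tensorProd]

lemma tp_add_left (l tl : Ω → Ω → Ω) (p : Ω → A →ₗ[K] A →ₗ[K] A) (u u' v : Ω →₀ A) :
    tensorProd (K := K) l tl p (u + u') v
      = tensorProd (K := K) l tl p u v + tensorProd (K := K) l tl p u' v := by
  unfold tensorProd
  refine Finsupp.sum_add_index' (fun α => ?_) (fun α b₁ b₂ => ?_)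
  · simp
  · simp [Finsupp.sum_add]

lemma tp_add_right (l tl : Ω → Ω → Ω) (p : Ω → A →ₗ[K] A →ₗ[K] A) (u v v' : Ω →₀ A) :
    tensorProd (K := K) l tl p u (v + v')
      = tensorProd (K := K) l tl p u v + tensorProd (K := K) l tl p u v' := by
  unfold tensorProd
  rw [← Finsupp.sum_add]
  refine Finsupp.sum_congr fun α _ => ?_
  refine Finsupp.sum_add_index' (fun β => ?_) (fun β b₁ b₂ => ?_)
  · simp
  · simp

lemma tp_ext3 {F G : (Ω →₀ A) → (Ω →₀ A) → (Ω →₀ A) → (Ω →₀ A)}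
    (hF0u : ∀ v w, F 0 v w = 0) (hG0u : ∀ v w, G 0 v w = 0)
    (hFu : ∀ u u' v w, F (u + u') v w = F u v w + F u' v w)
    (hGu : ∀ u u' v w, G (u + u') v w = G u v w + G u' v w)
    (hF0v : ∀ u w, F u 0 w = 0) (hG0v : ∀ u w, G u 0 w = 0)
    (hFv : ∀ u v v' w, F u (v + v') w = F u v w + F u v' w)
    (hGv : ∀ u v v' w, G u (v + v') w = G u v w + G u v' w)
    (hF0w : ∀ u v, F u v 0 = 0) (hG0w : ∀ u v, G u v 0 = 0)
    (hFw : ∀ u v w w', F u v (w + w') = F u v w + F u v w')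
    (hGw : ∀ u v w w', G u v (w + w') = G u v w + G u v w')
    (hs : ∀ (α β γ : Ω) (x y z : A),
      F (Finsupp.single α x) (Finsupp.single β y) (Finsupp.single γ z)
        = G (Finsupp.single α x) (Finsupp.single β y) (Finsupp.single γ z)) :
    ∀ u v w, F u v w = G u v w := by
  have h3 : ∀ (α : Ω) (x : A) (β : Ω) (y : A) (w : Ω →₀ A),
      F (Finsupp.single α x) (Finsupp.single β y) w
        = G (Finsupp.single α x) (Finsupp.single β y) w := by
    intro α x β y w
    induction w using Finsupp.induction with
    | zero => rw [hF0w, hG0w]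
    | single_add γ z f _ _ ih => rw [hFw, hGw, ih, hs]
  have h2 : ∀ (α : Ω) (x : A) (v w : Ω →₀ A),
      F (Finsupp.single α x) v w = G (Finsupp.single α x) v w := by
    intro α x v
    induction v using Finsupp.induction with
    | zero => intro w; rw [hF0v, hG0v]
    | single_add β y f _ _ ih => intro w; rw [hFv, hGv, ih w, h3]
  intro u
  induction u using Finsupp.induction with
  | zero => intro v w; rw [hF0u, hG0u]
  | single_add α x f _ _ ih => intro v w; rw [hFu, hGu, ih v w, h2]

variable (l r tl tr : Ω → Ω → Ω) (p s : Ω → A →ₗ[K] A →ₗ[K] A)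

lemma fwd1 (hdi : IsDiassoc l r)
    (hax : ∀ a b c : Ω,
      tr a (l b c) = tr a b ∧ tl (r a b) c = tl b c ∧
      l (tl a b) (tl (l a b) c) = tl a (l b c) ∧
      tl (tl a b) (tl (l a b) c) = tl b c ∧
      r (tl a b) (tl (l a b) c) = tl a (r b c) ∧
      tr (tl a b) (tl (l a b) c) = tr b c ∧
      l (tr a (r b c)) (tr b c) = tr (l a b) c ∧
      tl (tr a (r b c)) (tr b c) = tl a b ∧
      r (tr a (r b c)) (tr b c) = tr (r a b) c ∧
      tr (tr a (r b c)) (tr b c) = tr a b)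
    (hΩ : IsOmegaDendriform l r tl tr (fun α x y => p α x y) (fun α x y => s α x y))
    (u v w : Ω →₀ A) :
    tensorProd (K := K) l tl p (tensorProd (K := K) l tl p u v) w
      = tensorProd (K := K) l tl p u
        (tensorProd (K := K) l tl p v w + tensorProd (K := K) r tr s v w) := by
  refine tp_ext3
    (F := fun u v w => tensorProd (K := K) l tl p (tensorProd (K := K) l tl p u v) w)
    (G := fun u v w => tensorProd (K := K) l tl p u
      (tensorProd (K := K) l tl p v w + tensorProd (K := K) r tr s v w))
    (fun v w => by simp only [tp_zero_left])
    (fun v w => by simp only [tp_zero_left])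
    (fun u u' v w => by simp only [tp_add_left])
    (fun u u' v w => by simp only [tp_add_left])
    (fun u w => by simp only [tp_zero_left, tp_zero_right])
    (fun u w => by simp only [tp_zero_left, tp_zero_right, add_zero])
    (fun u v v' w => by simp only [tp_add_left, tp_add_right])
    (fun u v v' w => by
      simp only [tp_add_left, tp_add_right, ← add_assoc]
      rw [add_right_comm (tensorProd (K := K) l tl p u (tensorProd (K := K) l tl p v w))])
    (fun u v => by simp only [tp_zero_right])
    (fun u v => by simp only [tp_zero_right, add_zero])
    (fun u v w w' => by simp only [tp_add_right])
    (fun u v w w' => by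
      simp only [tp_add_right, ← add_assoc]
      rw [add_right_comm (tensorProd (K := K) l tl p u (tensorProd (K := K) l tl p v w))])
    (fun α β γ x y z => ?_) u v w
  obtain ⟨d1, d2, d3, d4, d5⟩ := hdi α β γ
  obtain ⟨e1, e2, e3, e4, e5, e6, e7, e8, e9, e10⟩ := hax α β γ
  have hΩ1 : p (tl (l α β) γ) (p (tl α β) x y) z
      = p (l (tl α β) (tl (l α β) γ)) x (p (tl (tl α β) (tl (l α β) γ)) y z)
        + p (r (tl α β) (tl (l α β) γ)) x (s (tr (tl α β) (tl (l α β) γ)) y z) :=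
    (hΩ (tl α β) (tl (l α β) γ) x y z).1
  simp only [tp_ss, tp_add_right]
  rw [hΩ1, e3, e4, e5, e6, d1, ← d2, Finsupp.single_add]
lemma fwd2 (hdi : IsDiassoc l r)
    (hax : ∀ a b c : Ω,
      tr a (l b c) = tr a b ∧ tl (r a b) c = tl b c ∧
      l (tl a b) (tl (l a b) c) = tl a (l b c) ∧
      tl (tl a b) (tl (l a b) c) = tl b c ∧
      r (tl a b) (tl (l a b) c) = tl a (r b c) ∧
      tr (tl a b) (tl (l a b) c) = tr b c ∧
      l (tr a (r b c)) (tr b c) = tr (l a b) c ∧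
      tl (tr a (r b c)) (tr b c) = tl a b ∧
      r (tr a (r b c)) (tr b c) = tr (r a b) c ∧
      tr (tr a (r b c)) (tr b c) = tr a b)
    (hΩ : IsOmegaDendriform l r tl tr (fun α x y => p α x y) (fun α x y => s α x y))
    (u v w : Ω →₀ A) :
    tensorProd (K := K) l tl p (tensorProd (K := K) r tr s u v) w
      = tensorProd (K := K) r tr s u (tensorProd (K := K) l tl p v w) := by
  refine tp_ext3
    (F := fun u v w => tensorProd (K := K) l tl p (tensorProd (K := K) r tr s u v) w)
    (G := fun u v w => tensorProd (K := K) r tr s u (tensorProd (K := K) l tl p v w))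
    (fun v w => by simp only [tp_zero_left])
    (fun v w => by simp only [tp_zero_left])
    (fun u u' v w => by simp only [tp_add_left])
    (fun u u' v w => by simp only [tp_add_left])
    (fun u w => by simp only [tp_zero_right, tp_zero_left])
    (fun u w => by simp only [tp_zero_left, tp_zero_right])
    (fun u v v' w => by simp only [tp_add_right, tp_add_left])
    (fun u v v' w => by simp only [tp_add_left, tp_add_right])
    (fun u v => by simp only [tp_zero_right])
    (fun u v => by simp only [tp_zero_right])
    (fun u v w w' => by simp only [tp_add_right])
    (fun u v w w' => by simp only [tp_add_right])
    (fun α β γ x y z => ?_) u v w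
  obtain ⟨d1, d2, d3, d4, d5⟩ := hdi α β γ
  obtain ⟨e1, e2, e3, e4, e5, e6, e7, e8, e9, e10⟩ := hax α β γ
  have hΩ2 : s (tr α β) x (p (tl β γ) y z) = p (tl β γ) (s (tr α β) x y) z :=
    (hΩ (tr α β) (tl β γ) x y z).2.1
  simp only [tp_ss]
  rw [e2, d3, e1, hΩ2]

lemma fwd3 (hdi : IsDiassoc l r)
    (hax : ∀ a b c : Ω,
      tr a (l b c) = tr a b ∧ tl (r a b) c = tl b c ∧
      l (tl a b) (tl (l a b) c) = tl a (l b c) ∧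
      tl (tl a b) (tl (l a b) c) = tl b c ∧
      r (tl a b) (tl (l a b) c) = tl a (r b c) ∧
      tr (tl a b) (tl (l a b) c) = tr b c ∧
      l (tr a (r b c)) (tr b c) = tr (l a b) c ∧
      tl (tr a (r b c)) (tr b c) = tl a b ∧
      r (tr a (r b c)) (tr b c) = tr (r a b) c ∧
      tr (tr a (r b c)) (tr b c) = tr a b)
    (hΩ : IsOmegaDendriform l r tl tr (fun α x y => p α x y) (fun α x y => s α x y))
    (u v w : Ω →₀ A) :
    tensorProd (K := K) r tr s u (tensorProd (K := K) r tr s v w)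
      = tensorProd (K := K) r tr s
        (tensorProd (K := K) l tl p u v + tensorProd (K := K) r tr s u v) w := by
  refine tp_ext3
    (F := fun u v w => tensorProd (K := K) r tr s u (tensorProd (K := K) r tr s v w))
    (G := fun u v w => tensorProd (K := K) r tr s
      (tensorProd (K := K) l tl p u v + tensorProd (K := K) r tr s u v) w)
    (fun v w => by simp only [tp_zero_left])
    (fun v w => by simp only [tp_zero_left, add_zero])
    (fun u u' v w => by simp only [tp_add_left])
    (fun u u' v w => by simp only [tp_add_left]; abel)
    (fun u w => by simp only [tp_zero_left, tp_zero_right])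
    (fun u w => by simp only [tp_zero_right, add_zero, tp_zero_left])
    (fun u v v' w => by simp only [tp_add_left, tp_add_right])
    (fun u v v' w => by simp only [tp_add_left, tp_add_right]; abel)
    (fun u v => by simp only [tp_zero_right])
    (fun u v => by simp only [tp_zero_right])
    (fun u v w w' => by simp only [tp_add_right])
    (fun u v w w' => by simp only [tp_add_right])
    (fun α β γ x y z => ?_) u v w
  obtain ⟨d1, d2, d3, d4, d5⟩ := hdi α β γ
  obtain ⟨e1, e2, e3, e4, e5, e6, e7, e8, e9, e10⟩ := hax α β γ
  have hΩ3 : s (tr α (r β γ)) x (s (tr β γ) y z)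
      = s (r (tr α (r β γ)) (tr β γ)) (s (tr (tr α (r β γ)) (tr β γ)) x y) z
        + s (l (tr α (r β γ)) (tr β γ)) (p (tl (tr α (r β γ)) (tr β γ)) x y) z :=
    (hΩ (tr α (r β γ)) (tr β γ) x y z).2.2
  simp only [tp_ss, tp_add_left]
  rw [hΩ3, e7, e8, e9, e10, d5, ← d4, Finsupp.single_add]
  exact add_comm _ _

end Aux

/-- Proposition 18: for an EDS `Ω` and a vector space `A` with bilinear products
`≺_α, ≻_α`, if `A` is `Ω`-dendriform then `KΩ ⊗ A` with
`(α⊗x) ≺ (β⊗y) = (α←β)⊗(x ≺_{α◁β} y)`, `(α⊗x) ≻ (β⊗y) = (α→β)⊗(x ≻_{α▷β} y)`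
is dendriform; conversely, if `φ←` and `φ→` are surjective and `KΩ ⊗ A` is
dendriform, then `A` is `Ω`-dendriform. -/
theorem stmt17 {K : Type*} [Field K] {Ω : Type*} {A : Type*}
    [AddCommGroup A] [Module K A] (l r tl tr : Ω → Ω → Ω)
    (hEDS : IsEDS l r tl tr) (p s : Ω → A →ₗ[K] A →ₗ[K] A) :
    (IsOmegaDendriform l r tl tr (fun α x y => p α x y) (fun α x y => s α x y) →
      IsDendriform (tensorProd (K := K) l tl p) (tensorProd (K := K) r tr s)) ∧
    ((Function.Surjective (fun q : Ω × Ω => (l q.1 q.2, tl q.1 q.2)) →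
      Function.Surjective (fun q : Ω × Ω => (r q.1 q.2, tr q.1 q.2)) →
      IsDendriform (tensorProd (K := K) l tl p) (tensorProd (K := K) r tr s) →
      IsOmegaDendriform l r tl tr (fun α x y => p α x y) (fun α x y => s α x y))) := by
  obtain ⟨hdi, hax⟩ := hEDS
  constructor
  · intro hΩ u v w
    exact ⟨fwd1 l r tl tr p s hdi hax hΩ u v w, fwd2 l r tl tr p s hdi hax hΩ u v w,
      fwd3 l r tl tr p s hdi hax hΩ u v w⟩
  · intro hsl hsr hd
    intro α β x y z
    refine ⟨?_, ?_, ?_⟩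
    · obtain ⟨⟨δ, γ₀⟩, h1⟩ := hsl (β, β)
      have ht1 : tl δ γ₀ = β := congrArg Prod.snd h1
      obtain ⟨⟨α₀, β₀⟩, h2⟩ := hsl (δ, α)
      have hl2 : l α₀ β₀ = δ := congrArg Prod.fst h2
      have ht2 : tl α₀ β₀ = α := congrArg Prod.snd h2
      have key := (hd (Finsupp.single α₀ x) (Finsupp.single β₀ y) (Finsupp.single γ₀ z)).1
      obtain ⟨d1, d2, d3, d4, d5⟩ := hdi α₀ β₀ γ₀
      obtain ⟨e1, e2, e3, e4, e5, e6, e7, e8, e9, e10⟩ := hax α₀ β₀ γ₀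
      simp only [tp_ss, tp_add_right] at key
      rw [d1, ← d2, ← e3, ← e4, ← e5, ← e6, hl2, ht1, ht2,
        ← Finsupp.single_add] at key
      exact Finsupp.single_injective _ key
    · obtain ⟨⟨v, n⟩, h1⟩ := hsr (α, α)
      have ht1 : tr v n = α := congrArg Prod.snd h1
      obtain ⟨⟨β₀, γ₀⟩, h2⟩ := hsl (n, β)
      have hl2 : l β₀ γ₀ = n := congrArg Prod.fst h2
      have ht2 : tl β₀ γ₀ = β := congrArg Prod.snd h2
      have key := (hd (Finsupp.single v x) (Finsupp.single β₀ y) (Finsupp.single γ₀ z)).2.1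
      obtain ⟨d1, d2, d3, d4, d5⟩ := hdi v β₀ γ₀
      obtain ⟨e1, e2, e3, e4, e5, e6, e7, e8, e9, e10⟩ := hax v β₀ γ₀
      have htv : tr v β₀ = α := by rw [← e1, hl2]; exact ht1
      simp only [tp_ss] at key
      rw [d3, e2, e1, htv, ht2, hl2] at key
      exact (Finsupp.single_injective _ key).symm
    · obtain ⟨⟨α₀, n⟩, h1⟩ := hsr (α, α)
      have ht1 : tr α₀ n = α := congrArg Prod.snd h1
      obtain ⟨⟨β₀, γ₀⟩, h2⟩ := hsr (n, β)
      have hr2 : r β₀ γ₀ = n := congrArg Prod.fst h2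
      have ht2 : tr β₀ γ₀ = β := congrArg Prod.snd h2
      have key := (hd (Finsupp.single α₀ x) (Finsupp.single β₀ y) (Finsupp.single γ₀ z)).2.2
      obtain ⟨d1, d2, d3, d4, d5⟩ := hdi α₀ β₀ γ₀
      obtain ⟨e1, e2, e3, e4, e5, e6, e7, e8, e9, e10⟩ := hax α₀ β₀ γ₀
      rw [← hr2] at ht1
      simp only [tp_ss, tp_add_left] at key
      rw [← e7, ← e8, ← e9, ← e10, d4, d5, ht1, ht2, ← Finsupp.single_add] at key
      exact (Finsupp.single_injective _ key).trans (add_comm _ _)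
end

section
/- Let (Ω, ⋆) be a group and consider the EDS with ← = → = ⋆, α◁β = β, α▷β = α. In the operad of Ω-dendriform algebras, an element m = Σ a_α ≺_α + Σ b_α ≻_α of the arity-2 component is associative (m∘(m,I) = m∘(I,m)) if and only if m = 0 or there exist a nonzero scalar λ and a subgroup G of Ω such that m = λ Σ_{α∈G}(≺_α + ≻_α). Equivalently: the coefficient conditions b_{α⋆β}b_α = b_α b_β, a_{α⋆β}a_β = a_α a_β, b_{α⋆β}b_β = b_α a_β, a_{α⋆β}a_α = a_α b_β for all α, β ∈ Ω hold if and only if either all a_α, b_α vanish, or there is a subgroup G and λ ≠ 0 with a_α = b_α = λ for α ∈ G and a_α = b_α = 0 otherwise. -/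
/-- For a group `(G, ⋆)` and the EDS `EDS(G,⋆,⋆)` (`← = → = ⋆`, `α◁β = β`,
`α▷β = α`), an arity-2 element `m = Σ a_α ≺_α + Σ b_α ≻_α` of the operad of
`G`-dendriform algebras is associative iff the coefficient conditions
`b_{α⋆β}b_α = b_α b_β`, `a_{α⋆β}a_β = a_α a_β`, `b_{α⋆β}b_β = b_α a_β`,
`a_{α⋆β}a_α = a_α b_β` hold; and this happens iff either all coefficients
vanish or there are a nonzero scalar `λ` and a subgroup `H ≤ G` with
`a_α = b_α = λ` for `α ∈ H` and `a_α = b_α = 0` otherwise. -/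
theorem stmt18 {G : Type*} [Group G] {K : Type*} [Field K]
    (a b : G →₀ K) :
    (∀ α β : G,
        b (α * β) * b α = b α * b β ∧
        a (α * β) * a β = a α * a β ∧
        b (α * β) * b β = b α * a β ∧
        a (α * β) * a α = a α * b β) ↔
      ((a = 0 ∧ b = 0) ∨
        ∃ (lam : K) (H : Subgroup G), lam ≠ 0 ∧
          (∀ α : G, α ∈ H → a α = lam ∧ b α = lam) ∧
          (∀ α : G, α ∉ H → a α = 0 ∧ b α = 0)) := by
  constructor
  · intro h
    by_cases hz : a = 0 ∧ b = 0
    · exact Or.inl hz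
    right
    -- a is constant on its support
    have ha_const : ∀ β, a β ≠ 0 → a β = a 1 := by
      intro β hβ
      have h2 := (h 1 β).2.1
      rw [one_mul] at h2
      exact mul_right_cancel₀ hβ h2
    have hb_const : ∀ α, b α ≠ 0 → b α = b 1 := by
      intro α hα
      have h1 := (h α 1).1
      rw [mul_one] at h1
      exact mul_left_cancel₀ hα h1
    have h31 := (h 1 1).2.2.1
    rw [one_mul] at h31
    have h41 := (h 1 1).2.2.2
    rw [one_mul] at h41
    have hlamA : a 1 ≠ 0 := by
      rcases not_and_or.mp hz with hne | hne
      · obtain ⟨γ, hγ⟩ := Finsupp.ne_iff.mp hne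
        simp only [Finsupp.coe_zero, Pi.zero_apply] at hγ
        rw [← ha_const γ hγ]; exact hγ
      · obtain ⟨γ, hγ⟩ := Finsupp.ne_iff.mp hne
        simp only [Finsupp.coe_zero, Pi.zero_apply] at hγ
        have hb1 : b 1 ≠ 0 := by rw [← hb_const γ hγ]; exact hγ
        have := mul_left_cancel₀ hb1 h31
        rw [← this]; exact hb1
    have hab : ∀ β, a β = b β := by
      intro β
      have h4 := (h 1 β).2.2.2
      rw [one_mul, mul_comm (a β) (a 1)] at h4
      exact mul_left_cancel₀ hlamA h4
    refine ⟨a 1, {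
      carrier := {α | a α ≠ 0}
      mul_mem' := ?_
      one_mem' := hlamA
      inv_mem' := ?_ }, hlamA, ?_, ?_⟩
    · intro x y hx hy
      have h2 := (h x y).2.1
      have := mul_right_cancel₀ hy h2
      show a (x * y) ≠ 0
      rw [this]; exact hx
    · intro x hx
      have h2 := (h x⁻¹ x).2.1
      rw [inv_mul_cancel] at h2
      have := mul_right_cancel₀ hx h2
      show a x⁻¹ ≠ 0
      rw [← this]; exact hlamA
    · intro α hα
      have hα' : a α ≠ 0 := hα
      refine ⟨ha_const α hα', ?_⟩
      rw [← hab]; exact ha_const α hα'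
    · intro α hα
      have hα' : a α = 0 := not_not.mp hα
      exact ⟨hα', by rw [← hab]; exact hα'⟩
  · rintro (⟨ha, hb⟩ | ⟨lam, H, hlam, hmem, hnmem⟩)
    · intro α β
      simp [ha, hb]
    · intro α β
      by_cases hα : α ∈ H <;> by_cases hβ : β ∈ H
      · have hαβ : α * β ∈ H := H.mul_mem hα hβ
        obtain ⟨h1, h2⟩ := hmem α hα
        obtain ⟨h3, h4⟩ := hmem β hβ
        obtain ⟨h5, h6⟩ := hmem _ hαβ
        simp [h1, h2, h3, h4, h5, h6]
      · have hαβ : α * β ∉ H := fun hm => hβ (by simpa using H.mul_mem (H.inv_mem hα) hm)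
        obtain ⟨h1, h2⟩ := hmem α hα
        obtain ⟨h3, h4⟩ := hnmem β hβ
        obtain ⟨h5, h6⟩ := hnmem _ hαβ
        simp [h1, h2, h3, h4, h5, h6]
      · have hαβ : α * β ∉ H := fun hm => hα (by simpa using H.mul_mem hm (H.inv_mem hβ))
        obtain ⟨h1, h2⟩ := hnmem α hα
        obtain ⟨h3, h4⟩ := hmem β hβ
        obtain ⟨h5, h6⟩ := hnmem _ hαβ
        simp [h1, h2, h3, h4, h5, h6]
      · obtain ⟨h1, h2⟩ := hnmem α hα
        obtain ⟨h3, h4⟩ := hnmem β hβ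
        simp [h1, h2, h3, h4]
end

section
/- Let Ω be a finite EDS with |Ω| = ω. The dimension of the arity-3 component of the Koszul dual operad P_Ω^! equals 3ω² + 2·coRk(Ω), where coRk(Ω) is the dimension of the kernel of the linear map φ : KΩ² → KΩ² × KΩ² sending (α,β) to (φ←(α,β), φ→(α,β)). Consequently, if the operad P_Ω of Ω-dendriform algebras is Koszul, then coRk(Ω) = 0 (Ω is weakly nondegenerate), since Koszulity forces dim P_Ω^!(3) = 3ω². -/
open Finsupp

/-- The linear map `φ : KΩ² → KΩ² × KΩ²` sending a basis element `(α,β)` to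
`(φ←(α,β), φ→(α,β))`, where `φ←(α,β) = (α←β, α◁β)`, `φ→(α,β) = (α→β, α▷β)`.
The corank of the EDS is the dimension of its kernel. -/
noncomputable def phiMap {K : Type} [Field K] {Ω : Type} (l r tl tr : Ω → Ω → Ω) :
    ((Ω × Ω) →₀ K) →ₗ[K] ((Ω × Ω) →₀ K) × ((Ω × Ω) →₀ K) :=
  Finsupp.lsum K fun q =>
    LinearMap.toSpanSingleton K _
      (Finsupp.single (l q.1 q.2, tl q.1 q.2) (1 : K),
       Finsupp.single (r q.1 q.2, tr q.1 q.2) (1 : K))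

/-- The basis of the arity-3 part of the free operad on the generators
`⊣_α, ⊢_α`: a shape (`false` for `∘(-, I)`, `true` for `∘(I, -)`), the outer
and inner generators (`false` for `⊣`, `true` for `⊢`), and their decorations. -/
abbrev Arity3Basis (Ω : Type) : Type := Bool × Bool × Bool × Ω × Ω

/-- The relations of the Koszul dual operad `P_Ω^!` in arity 3:
`⊣_β∘(⊣_α,I) = ⊣_{α←β}∘(I,⊣_{α◁β}) = ⊣_{α→β}∘(I,⊢_{α▷β})`;
`⊢_β∘(I,⊣_α) = ⊣_α∘(⊢_β,I)`;
`⊢_α∘(I,⊢_β) = ⊢_{α→β}∘(⊢_{α▷β},I) = ⊢_{α←β}∘(⊣_{α◁β},I)`. -/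
def dualRelations {K : Type} [Field K] {Ω : Type} (l r tl tr : Ω → Ω → Ω) :
    Set (Arity3Basis Ω →₀ K) :=
  {x | ∃ α β : Ω,
    x = Finsupp.single (false, false, false, β, α) 1
        - Finsupp.single (true, false, false, l α β, tl α β) 1 ∨
    x = Finsupp.single (true, false, false, l α β, tl α β) 1
        - Finsupp.single (true, false, true, r α β, tr α β) 1 ∨
    x = Finsupp.single (true, true, false, β, α) 1
        - Finsupp.single (false, false, true, α, β) 1 ∨
    x = Finsupp.single (true, true, true, α, β) 1
        - Finsupp.single (false, true, true, r α β, tr α β) 1 ∨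
    x = Finsupp.single (false, true, true, r α β, tr α β) 1
        - Finsupp.single (false, true, false, l α β, tl α β) 1}

namespace Stmt19Aux

variable {K : Type} [Field K] {Ω : Type}

/-- Embedding of a "block" into the arity-3 basis. -/
def emb (s : Bool × Bool × Bool) : Ω × Ω → Bool × Bool × Bool × Ω × Ω :=
  fun q => (s.1, s.2.1, s.2.2, q.1, q.2)

lemma emb_inj (s : Bool × Bool × Bool) : Function.Injective (emb (Ω := Ω) s) := by
  intro a b h
  simpa [emb, Prod.ext_iff] using h

variable (K) in
/-- Extraction of the coefficients of a block. -/
noncomputable def E (s : Bool × Bool × Bool) :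
    ((Bool × Bool × Bool × Ω × Ω) →₀ K) →ₗ[K] ((Ω × Ω) →₀ K) :=
  Finsupp.lcomapDomain (emb s) (emb_inj s)

lemma E_single (s t : Bool × Bool × Bool) (q : Ω × Ω) (c : K) :
    E K s (Finsupp.single (emb t q) c) = if t = s then Finsupp.single q c else 0 := by
  ext a
  rw [E, Finsupp.lcomapDomain]
  simp only [LinearMap.coe_mk, AddHom.coe_mk, Finsupp.comapDomain_apply]
  by_cases h : t = s
  · subst h
    by_cases hq : q = a
    · subst hq; simp
    · rw [Finsupp.single_eq_of_ne' (fun hh => hq (emb_inj t hh)), if_pos rfl,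
        Finsupp.single_eq_of_ne' hq]
  · have hne : emb t q ≠ emb s a := by
      intro hh
      apply h
      have h1 := congrArg Prod.fst hh
      have h2 := congrArg (fun x => x.2.1) hh
      have h3 := congrArg (fun x => x.2.2.1) hh
      simp only [emb] at h1 h2 h3
      exact Prod.ext h1 (Prod.ext h2 h3)
    rw [Finsupp.single_eq_of_ne' hne, if_neg h]
    rfl


variable (K) in
/-- Inclusion of the `i`-th copy of `KΩ²`. -/
noncomputable def ιm (i : Fin 5) : ((Ω × Ω) →₀ K) →ₗ[K] ((Fin 5 × Ω × Ω) →₀ K) :=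
  Finsupp.lmapDomain K K (fun q => (i, q))

variable (K) in
/-- Projection onto the `i`-th copy of `KΩ²`. -/
noncomputable def πm (i : Fin 5) : ((Fin 5 × Ω × Ω) →₀ K) →ₗ[K] ((Ω × Ω) →₀ K) :=
  Finsupp.lcomapDomain (fun q => (i, q)) (fun a b h => (Prod.ext_iff.mp h).2)

lemma ιm_single (i : Fin 5) (q : Ω × Ω) (c : K) :
    ιm K i (Finsupp.single q c) = Finsupp.single (i, q) c := by
  simp [ιm, Finsupp.mapDomain_single]

lemma πm_single (i j : Fin 5) (q : Ω × Ω) (c : K) :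
    πm K i (Finsupp.single (j, q) c) = if j = i then Finsupp.single q c else 0 := by
  ext a
  unfold πm Finsupp.lcomapDomain
  simp only [LinearMap.coe_mk, AddHom.coe_mk, Finsupp.comapDomain_apply]
  by_cases h : j = i
  · subst h
    by_cases hq : q = a
    · subst hq; simp
    · rw [Finsupp.single_eq_of_ne' (by simp [Prod.ext_iff, hq]), if_pos rfl,
        Finsupp.single_eq_of_ne' hq]
  · rw [Finsupp.single_eq_of_ne' (by simp [Prod.ext_iff]; tauto), if_neg h]
    rfl

lemma πm_ιm (i j : Fin 5) (u : (Ω × Ω) →₀ K) :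
    πm K i (ιm K j u) = if j = i then u else 0 := by
  by_cases h : j = i
  · subst h
    have : (πm K j).comp (ιm (Ω := Ω) K j) = LinearMap.id := by
      apply Finsupp.lhom_ext
      intro q c
      simp [ιm_single, πm_single]
    simpa using LinearMap.congr_fun this u
  · have : (πm K i).comp (ιm (Ω := Ω) K j) = 0 := by
      apply Finsupp.lhom_ext
      intro q c
      simp [ιm_single, πm_single, h]
    simpa [h] using LinearMap.congr_fun this u

lemma decomp (c : (Fin 5 × Ω × Ω) →₀ K) :
    c = ∑ i : Fin 5, ιm K i (πm K i c) := by
  have h : (∑ i : Fin 5, (ιm (Ω := Ω) K i).comp (πm K i)) = LinearMap.id := by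
    apply Finsupp.lhom_ext
    rintro ⟨j, q⟩ c
    simp only [LinearMap.sum_apply, LinearMap.comp_apply, πm_single, LinearMap.id_apply,
      apply_ite, map_zero, ιm_single]
    simp
  have := LinearMap.congr_fun h c
  simp only [LinearMap.sum_apply, LinearMap.comp_apply, LinearMap.id_apply] at this
  exact this.symm


variable (l r tl tr : Ω → Ω → Ω)

/-- `φ←`. -/
def φL : Ω × Ω → Ω × Ω := fun q => (l q.1 q.2, tl q.1 q.2)
/-- `φ→`. -/
def φR : Ω × Ω → Ω × Ω := fun q => (r q.1 q.2, tr q.1 q.2)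

variable (K) in
/-- The five families of relations, indexed by `Fin 5 × Ω × Ω`. -/
noncomputable def relFam (p : Fin 5 × Ω × Ω) : Arity3Basis Ω →₀ K :=
  if p.1.val = 0 then
    Finsupp.single (emb (false, false, false) (p.2.2, p.2.1)) 1
      - Finsupp.single (emb (true, false, false) (φL l tl p.2)) 1
  else if p.1.val = 1 then
    Finsupp.single (emb (true, false, false) (φL l tl p.2)) 1
      - Finsupp.single (emb (true, false, true) (φR r tr p.2)) 1
  else if p.1.val = 2 then
    Finsupp.single (emb (true, true, false) (p.2.2, p.2.1)) 1
      - Finsupp.single (emb (false, false, true) p.2) 1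
  else if p.1.val = 3 then
    Finsupp.single (emb (true, true, true) p.2) 1
      - Finsupp.single (emb (false, true, true) (φR r tr p.2)) 1
  else
    Finsupp.single (emb (false, true, true) (φR r tr p.2)) 1
      - Finsupp.single (emb (false, true, false) (φL l tl p.2)) 1

variable (K) in
/-- The relation map whose range is the span of the relations. -/
noncomputable def ρ : ((Fin 5 × Ω × Ω) →₀ K) →ₗ[K] (Arity3Basis Ω →₀ K) :=
  Finsupp.linearCombination K (relFam K l r tl tr)

lemma set_eq : dualRelations (K := K) l r tl tr = Set.range (relFam K l r tl tr) := by
  ext x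
  constructor
  · rintro ⟨α, β, (h | h | h | h | h)⟩
    exacts [⟨(0, α, β), h.symm⟩, ⟨(1, α, β), h.symm⟩, ⟨(2, α, β), h.symm⟩,
      ⟨(3, α, β), h.symm⟩, ⟨(4, α, β), h.symm⟩]
  · rintro ⟨⟨i, q⟩, rfl⟩
    refine ⟨q.1, q.2, ?_⟩
    fin_cases i
    · exact Or.inl rfl
    · exact Or.inr (Or.inl rfl)
    · exact Or.inr (Or.inr (Or.inl rfl))
    · exact Or.inr (Or.inr (Or.inr (Or.inl rfl)))
    · exact Or.inr (Or.inr (Or.inr (Or.inr rfl)))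

lemma span_eq :
    Submodule.span K (dualRelations (K := K) l r tl tr) = LinearMap.range (ρ K l r tl tr) := by
  rw [set_eq, ρ, Finsupp.range_linearCombination]


variable (K) in
noncomputable def Lm : ((Ω × Ω) →₀ K) →ₗ[K] ((Ω × Ω) →₀ K) := Finsupp.lmapDomain K K (φL l tl)
variable (K) in
noncomputable def Rm : ((Ω × Ω) →₀ K) →ₗ[K] ((Ω × Ω) →₀ K) := Finsupp.lmapDomain K K (φR r tr)
variable (K) in
noncomputable def Sm : ((Ω × Ω) →₀ K) →ₗ[K] ((Ω × Ω) →₀ K) :=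
  Finsupp.lmapDomain K K (Prod.swap)

lemma phiMap_eq :
    phiMap (K := K) l r tl tr = LinearMap.prod (Lm K l tl) (Rm K r tr) := by
  apply Finsupp.lhom_ext
  intro q c
  simp [phiMap, Lm, Rm, Finsupp.lsum_single, LinearMap.toSpanSingleton_apply,
    Finsupp.mapDomain_single, φL, φR, Finsupp.smul_single', Prod.smul_mk]

lemma comp_FFF :
    (E K (false, false, false)).comp (ρ K l r tl tr) = (Sm (Ω := Ω) K).comp (πm K 0) := by
  apply Finsupp.lhom_ext
  rintro ⟨i, q⟩ c
  fin_cases i <;>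
    simp [ρ, relFam, Finsupp.linearCombination_single, E_single, πm_single, Sm,
      Finsupp.mapDomain_single, Finsupp.smul_single', smul_sub, Prod.swap,
      show ((2 : Fin 5) : ℕ) = 2 from rfl, show ((3 : Fin 5) : ℕ) = 3 from rfl,
      show ((4 : Fin 5) : ℕ) = 4 from rfl]

lemma comp_TFF :
    (E K (true, false, false)).comp (ρ K l r tl tr)
      = (Lm K l tl).comp (πm K 1) - (Lm K l tl).comp (πm K 0) := by
  apply Finsupp.lhom_ext
  rintro ⟨i, q⟩ c
  fin_cases i <;>
    simp [ρ, relFam, Finsupp.linearCombination_single, E_single, πm_single, Lm,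
      Finsupp.mapDomain_single, Finsupp.smul_single', smul_sub,
      show ((2 : Fin 5) : ℕ) = 2 from rfl, show ((3 : Fin 5) : ℕ) = 3 from rfl,
      show ((4 : Fin 5) : ℕ) = 4 from rfl]

lemma comp_TFT :
    (E K (true, false, true)).comp (ρ K l r tl tr) = -((Rm K r tr).comp (πm K 1)) := by
  apply Finsupp.lhom_ext
  rintro ⟨i, q⟩ c
  fin_cases i <;>
    simp [ρ, relFam, Finsupp.linearCombination_single, E_single, πm_single, Rm,
      Finsupp.mapDomain_single, Finsupp.smul_single', smul_sub,
      show ((2 : Fin 5) : ℕ) = 2 from rfl, show ((3 : Fin 5) : ℕ) = 3 from rfl,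
      show ((4 : Fin 5) : ℕ) = 4 from rfl]

lemma comp_FFT :
    (E K (false, false, true)).comp (ρ K l r tl tr) = -(πm K 2) := by
  apply Finsupp.lhom_ext
  rintro ⟨i, q⟩ c
  fin_cases i <;>
    simp [ρ, relFam, Finsupp.linearCombination_single, E_single, πm_single,
      Finsupp.mapDomain_single, Finsupp.smul_single', smul_sub,
      show ((2 : Fin 5) : ℕ) = 2 from rfl, show ((3 : Fin 5) : ℕ) = 3 from rfl,
      show ((4 : Fin 5) : ℕ) = 4 from rfl]

lemma comp_TTT :
    (E K (true, true, true)).comp (ρ K l r tl tr) = πm K 3 := by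
  apply Finsupp.lhom_ext
  rintro ⟨i, q⟩ c
  fin_cases i <;>
    simp [ρ, relFam, Finsupp.linearCombination_single, E_single, πm_single,
      Finsupp.mapDomain_single, Finsupp.smul_single', smul_sub,
      show ((2 : Fin 5) : ℕ) = 2 from rfl, show ((3 : Fin 5) : ℕ) = 3 from rfl,
      show ((4 : Fin 5) : ℕ) = 4 from rfl]

lemma comp_FTT :
    (E K (false, true, true)).comp (ρ K l r tl tr)
      = (Rm K r tr).comp (πm K 4) - (Rm K r tr).comp (πm K 3) := by
  apply Finsupp.lhom_ext
  rintro ⟨i, q⟩ c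
  fin_cases i <;>
    simp [ρ, relFam, Finsupp.linearCombination_single, E_single, πm_single, Rm,
      Finsupp.mapDomain_single, Finsupp.smul_single', smul_sub,
      show ((2 : Fin 5) : ℕ) = 2 from rfl, show ((3 : Fin 5) : ℕ) = 3 from rfl,
      show ((4 : Fin 5) : ℕ) = 4 from rfl]

lemma comp_FTF :
    (E K (false, true, false)).comp (ρ K l r tl tr) = -((Lm K l tl).comp (πm K 4)) := by
  apply Finsupp.lhom_ext
  rintro ⟨i, q⟩ c
  fin_cases i <;>
    simp [ρ, relFam, Finsupp.linearCombination_single, E_single, πm_single, Lm,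
      Finsupp.mapDomain_single, Finsupp.smul_single', smul_sub,
      show ((2 : Fin 5) : ℕ) = 2 from rfl, show ((3 : Fin 5) : ℕ) = 3 from rfl,
      show ((4 : Fin 5) : ℕ) = 4 from rfl]


lemma ιm_inj (i : Fin 5) : Function.Injective (ιm (Ω := Ω) K i) := by
  intro x y h
  simp only [ιm, Finsupp.lmapDomain_apply] at h
  exact Finsupp.mapDomain_injective (fun a b hab => (Prod.ext_iff.mp hab).2) h

lemma mapDomain_eq_zero {α β : Type} {f : α → β} (hf : Function.Injective f)
    {x : α →₀ K} (h : Finsupp.mapDomain f x = 0) : x = 0 :=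
  Finsupp.mapDomain_injective hf (by simpa using h)

lemma comp_iota1 :
    (ρ K l r tl tr).comp (ιm K 1)
      = ((Finsupp.lmapDomain K K (emb (true, false, false))).comp
            (LinearMap.fst K _ _)
          - (Finsupp.lmapDomain K K (emb (true, false, true))).comp
            (LinearMap.snd K _ _)).comp (phiMap (K := K) l r tl tr) := by
  apply Finsupp.lhom_ext
  intro q c
  simp [ρ, relFam, ιm_single, Finsupp.linearCombination_single, phiMap, Finsupp.lsum_single,
    LinearMap.toSpanSingleton_apply, Finsupp.smul_single', Finsupp.mapDomain_single,
    smul_sub, φL, φR, Prod.smul_mk]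

lemma comp_iota4 :
    (ρ K l r tl tr).comp (ιm K 4)
      = ((Finsupp.lmapDomain K K (emb (false, true, true))).comp
            (LinearMap.snd K _ _)
          - (Finsupp.lmapDomain K K (emb (false, true, false))).comp
            (LinearMap.fst K _ _)).comp (phiMap (K := K) l r tl tr) := by
  apply Finsupp.lhom_ext
  intro q c
  simp [ρ, relFam, ιm_single, Finsupp.linearCombination_single, phiMap, Finsupp.lsum_single,
    LinearMap.toSpanSingleton_apply, Finsupp.smul_single', Finsupp.mapDomain_single,
    smul_sub, φL, φR, Prod.smul_mk,
    show ((4 : Fin 5) : ℕ) = 4 from rfl]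

lemma ker_eq :
    LinearMap.ker (ρ K l r tl tr)
      = (LinearMap.ker (phiMap (K := K) l r tl tr)).map (ιm K 1)
        ⊔ (LinearMap.ker (phiMap (K := K) l r tl tr)).map (ιm K 4) := by
  apply le_antisymm
  · intro c hc
    rw [LinearMap.mem_ker] at hc
    have app : ∀ (s : Bool × Bool × Bool) (F : ((Fin 5 × Ω × Ω) →₀ K) →ₗ[K] ((Ω × Ω) →₀ K)),
        (E K s).comp (ρ K l r tl tr) = F → F c = 0 := by
      intro s F hF
      have := LinearMap.congr_fun hF c
      simp only [LinearMap.comp_apply, hc, map_zero] at this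
      exact this.symm
    have h0 : πm K 0 c = 0 := by
      have := app _ _ (comp_FFF l r tl tr)
      exact mapDomain_eq_zero (fun a b hab => Prod.swap_injective hab) (by simpa [Sm] using this)
    have h2 : πm K 2 c = 0 := by
      have := app _ _ (comp_FFT l r tl tr)
      simpa [neg_eq_zero] using this
    have h3 : πm K 3 c = 0 := by
      exact app _ _ (comp_TTT l r tl tr)
    have hL1 : Lm K l tl (πm K 1 c) = 0 := by
      have := app _ _ (comp_TFF l r tl tr)
      simpa [h0] using this
    have hR1 : Rm K r tr (πm K 1 c) = 0 := by
      have := app _ _ (comp_TFT l r tl tr)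
      simpa [neg_eq_zero] using this
    have hR4 : Rm K r tr (πm K 4 c) = 0 := by
      have := app _ _ (comp_FTT l r tl tr)
      simpa [h3] using this
    have hL4 : Lm K l tl (πm K 4 c) = 0 := by
      have := app _ _ (comp_FTF l r tl tr)
      simpa [neg_eq_zero] using this
    have hker1 : πm K 1 c ∈ LinearMap.ker (phiMap (K := K) l r tl tr) := by
      rw [LinearMap.mem_ker, phiMap_eq]
      exact Prod.ext hL1 hR1
    have hker4 : πm K 4 c ∈ LinearMap.ker (phiMap (K := K) l r tl tr) := by
      rw [LinearMap.mem_ker, phiMap_eq]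
      exact Prod.ext hL4 hR4
    have hdec := decomp c
    rw [Fin.sum_univ_five, h0, h2, h3] at hdec
    simp only [map_zero, zero_add, add_zero] at hdec
    rw [hdec]
    exact Submodule.add_mem_sup (Submodule.mem_map_of_mem hker1)
      (Submodule.mem_map_of_mem hker4)
  · apply sup_le
    · rintro x ⟨u, hu, rfl⟩
      rw [LinearMap.mem_ker]
      have := LinearMap.congr_fun (comp_iota1 l r tl tr) u
      simp only [LinearMap.comp_apply] at this
      rw [this, LinearMap.mem_ker.mp hu, map_zero]
    · rintro x ⟨u, hu, rfl⟩
      rw [LinearMap.mem_ker]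
      have := LinearMap.congr_fun (comp_iota4 l r tl tr) u
      simp only [LinearMap.comp_apply] at this
      rw [this, LinearMap.mem_ker.mp hu, map_zero]


lemma inf_eq_bot :
    (LinearMap.ker (phiMap (K := K) l r tl tr)).map (ιm K 1)
        ⊓ (LinearMap.ker (phiMap (K := K) l r tl tr)).map (ιm K 4) = ⊥ := by
  rw [eq_bot_iff]
  rintro x ⟨⟨u, -, hux⟩, ⟨v, -, hvx⟩⟩
  have hu0 : u = 0 := by
    have h1 : πm K 1 x = u := by rw [← hux, πm_ιm]; rfl
    have h2 : πm K 1 x = 0 := by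
      rw [← hvx, πm_ιm, if_neg (by decide)]
    rw [h1] at h2
    exact h2
  rw [Submodule.mem_bot, ← hux, hu0, map_zero]

variable [Fintype Ω]

lemma finrank_ker_rho :
    Module.finrank K (LinearMap.ker (ρ K l r tl tr))
      = 2 * Module.finrank K (LinearMap.ker (phiMap (K := K) l r tl tr)) := by
  rw [ker_eq]
  have hA : Module.finrank K (LinearMap.ker (phiMap (K := K) l r tl tr))
      = Module.finrank K
        ((LinearMap.ker (phiMap (K := K) l r tl tr)).map (ιm (Ω := Ω) K 1)) :=
    LinearEquiv.finrank_eq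
      (Submodule.equivMapOfInjective (ιm (Ω := Ω) K 1) (ιm_inj 1)
        (LinearMap.ker (phiMap (K := K) l r tl tr)))
  have hB : Module.finrank K (LinearMap.ker (phiMap (K := K) l r tl tr))
      = Module.finrank K
        ((LinearMap.ker (phiMap (K := K) l r tl tr)).map (ιm (Ω := Ω) K 4)) :=
    LinearEquiv.finrank_eq
      (Submodule.equivMapOfInjective (ιm (Ω := Ω) K 4) (ιm_inj 4)
        (LinearMap.ker (phiMap (K := K) l r tl tr)))
  have hsum := Submodule.finrank_sup_add_finrank_inf_eq
    ((LinearMap.ker (phiMap (K := K) l r tl tr)).map (ιm K 1))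
    ((LinearMap.ker (phiMap (K := K) l r tl tr)).map (ιm K 4))
  rw [inf_eq_bot, finrank_bot, ← hA, ← hB] at hsum
  omega

lemma main_eq :
    Module.finrank K
        ((Arity3Basis Ω →₀ K) ⧸ Submodule.span K (dualRelations (K := K) l r tl tr))
      = 3 * Fintype.card Ω ^ 2
        + 2 * Module.finrank K (LinearMap.ker (phiMap (K := K) l r tl tr)) := by
  have h1 : Module.finrank K (Arity3Basis Ω →₀ K) = 8 * Fintype.card Ω ^ 2 := by
    rw [Module.finrank_finsupp_self]
    simp [Fintype.card_prod]
    ring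
  have h2 : Module.finrank K ((Fin 5 × Ω × Ω) →₀ K) = 5 * Fintype.card Ω ^ 2 := by
    rw [Module.finrank_finsupp_self]
    simp [Fintype.card_prod]
    ring
  have h3 := LinearMap.finrank_range_add_finrank_ker (ρ K l r tl tr)
  have h4 := Submodule.finrank_quotient_add_finrank
    (Submodule.span K (dualRelations (K := K) l r tl tr))
  have h5 : Module.finrank K (Submodule.span K (dualRelations (K := K) l r tl tr))
      = Module.finrank K (LinearMap.range (ρ K l r tl tr)) := by
    rw [span_eq]
  rw [finrank_ker_rho] at h3
  rw [h1] at h4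
  rw [h2] at h3
  generalize Fintype.card Ω ^ 2 = m at h3 h4 ⊢
  omega

end Stmt19Aux

/-- Proposition: for a finite EDS `Ω` with `|Ω| = ω`, the arity-3 component of
the Koszul dual operad `P_Ω^!` — the quotient of the arity-3 part of the free
operad on `⊣_α, ⊢_α` by the span of the quadratic relations — has dimension
`3ω² + 2·coRk(Ω)`, where `coRk(Ω) = dim ker φ`. Consequently, if the operad
`P_Ω` is Koszul (which forces this dimension to be `3ω²`), then `ker φ = ⊥`,
i.e. `Ω` is weakly nondegenerate. -/
theorem stmt19 {K : Type} [Field K] {Ω : Type} [Fintype Ω]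
    (l r tl tr : Ω → Ω → Ω) :
    Module.finrank K
        ((Arity3Basis Ω →₀ K) ⧸ Submodule.span K (dualRelations (K := K) l r tl tr))
      = 3 * Fintype.card Ω ^ 2
        + 2 * Module.finrank K (LinearMap.ker (phiMap (K := K) l r tl tr)) ∧
    (Module.finrank K
        ((Arity3Basis Ω →₀ K) ⧸ Submodule.span K (dualRelations (K := K) l r tl tr))
      = 3 * Fintype.card Ω ^ 2 →
      LinearMap.ker (phiMap (K := K) l r tl tr) = ⊥) := by
  refine ⟨Stmt19Aux.main_eq l r tl tr, fun h => ?_⟩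
  have h2 := Stmt19Aux.main_eq (K := K) l r tl tr
  rw [h] at h2
  have hk : Module.finrank K (LinearMap.ker (phiMap (K := K) l r tl tr)) = 0 := by omega
  exact Submodule.finrank_eq_zero.mp hk
end
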